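/- arXiv:2412.04744 — 2 statements merged into one kernel-verified Lean document; each statement's English description precedes it below -/
import Mathlib

section
/- The bridge density p(u;φ) = sin(φπ) / (2π(cosh(φu) + cos(φπ))) is a probability density on ℝ for every φ ∈ (0,1), i.e., it is nonnegative and integrates to 1 over ℝ. -/
open Real MeasureTheory

/-- The bridge density `p_BR(u; φ) = sin(φπ) / (2π(cosh(φu) + cos(φπ)))`. -/
noncomputable def bridgePDF (φ u : ℝ) : ℝ :=
  Real.sin (φ * π) / (2 * π * (Real.cosh (φ * u) + Real.cos (φ * π)))

private lemma bridge_key_algebra (φ s2 c2 S C : ℝ) (hφ0 : 0 < φ)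
    (hC : 0 < C) (hc2 : 0 < c2)
    (hC2 : C^2 = 1 + S^2) (hs2c2 : s2^2 + c2^2 = 1)
    (hden : C^2 + S^2 + (1 - 2*s2^2) > 0) :
    2*s2*c2 / (2 * π * (C^2 + S^2 + (1 - 2*s2^2))) =
      1 / (1 + (s2/c2 * (S / C)) ^ 2) * (s2/c2 * ((C * (φ / 2) * C - S * (S * (φ / 2))) / C ^ 2)) / (φ * π) := by
  have hπ := Real.pi_pos
  have hpos : (0:ℝ) < 1 + (s2/c2*(S/C))^2 := by positivity
  rw [div_eq_div_iff (by positivity) (by positivity)]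
  field_simp
  linear_combination 2*s2*C^2 * hs2c2 - s2*(C^2+S^2) * hC2

private lemma bridge_hasDerivAt (φ : ℝ) (hφ : φ ∈ Set.Ioo (0:ℝ) 1) (u : ℝ) :
    HasDerivAt (fun u => Real.arctan (Real.tan (φ*π/2) * (Real.sinh (φ*u/2) / Real.cosh (φ*u/2))) / (φ*π))
      (bridgePDF φ u) u := by
  obtain ⟨hφ0, hφ1⟩ := hφ
  have hπ := Real.pi_pos
  have hC : Real.cosh (φ*u/2) ≠ 0 := (Real.cosh_pos _).ne'
  have h1 : HasDerivAt (fun u : ℝ => φ*u/2) (φ/2) u := by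
    simpa using ((hasDerivAt_id u).const_mul φ).div_const 2
  have hS : HasDerivAt (fun u : ℝ => Real.sinh (φ*u/2)) (Real.cosh (φ*u/2) * (φ/2)) u :=
    (Real.hasDerivAt_sinh _).comp u h1
  have hCo : HasDerivAt (fun u : ℝ => Real.cosh (φ*u/2)) (Real.sinh (φ*u/2) * (φ/2)) u :=
    (Real.hasDerivAt_cosh _).comp u h1
  have hq : HasDerivAt (fun u : ℝ => Real.sinh (φ*u/2) / Real.cosh (φ*u/2))
      ((Real.cosh (φ*u/2) * (φ/2) * Real.cosh (φ*u/2) - Real.sinh (φ*u/2) * (Real.sinh (φ*u/2) * (φ/2))) / Real.cosh (φ*u/2)^2) u :=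
    hS.div hCo hC
  have harc := ((hq.const_mul (Real.tan (φ*π/2))).arctan).div_const (φ*π)
  refine harc.congr_deriv ?_; symm
  have ha2 : φ*π/2 ∈ Set.Ioo (-(π/2)) (π/2) := by constructor <;> nlinarith
  have hc2 : 0 < Real.cos (φ*π/2) := Real.cos_pos_of_mem_Ioo ha2
  have hsin : Real.sin (φ*π) = 2 * Real.sin (φ*π/2) * Real.cos (φ*π/2) := by
    have := Real.sin_two_mul (φ*π/2)
    rw [show 2*(φ*π/2) = φ*π by ring] at this
    linarith
  have hpy := Real.sin_sq_add_cos_sq (φ*π/2)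
  have hcos : Real.cos (φ*π) = 1 - 2 * Real.sin (φ*π/2)^2 := by
    have := Real.cos_two_mul (φ*π/2)
    rw [show 2*(φ*π/2) = φ*π by ring] at this
    nlinarith
  have hch : Real.cosh (φ*u) = Real.cosh (φ*u/2)^2 + Real.sinh (φ*u/2)^2 := by
    have := Real.cosh_two_mul (φ*u/2)
    rw [show 2*(φ*u/2) = φ*u by ring] at this
    linarith
  have hC2 : Real.cosh (φ*u/2)^2 = 1 + Real.sinh (φ*u/2)^2 := by
    have := Real.cosh_sq_sub_sinh_sq (φ*u/2); nlinarith
  have hden : Real.cosh (φ*u/2)^2 + Real.sinh (φ*u/2)^2 + (1 - 2*Real.sin (φ*π/2)^2) > 0 := by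
    nlinarith [sq_nonneg (Real.sinh (φ*u/2)), mul_pos hc2 hc2]
  rw [Real.tan_eq_sin_div_cos, bridgePDF, hsin, hcos, hch]
  exact bridge_key_algebra φ _ _ _ _ hφ0 (Real.cosh_pos _) hc2 hC2 (by linarith) hden

private lemma tanh_limit : Filter.Tendsto (fun y : ℝ => Real.sinh y / Real.cosh y)
    Filter.atTop (nhds 1) := by
  have heq : (fun y : ℝ => Real.sinh y / Real.cosh y)
      = fun y : ℝ => (1 - Real.exp (-(2*y))) / (1 + Real.exp (-(2*y))) := by
    funext y
    have ht : Real.exp y * Real.exp (-y) = 1 := by rw [← Real.exp_add]; simp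
    have h2 : Real.exp (-(2*y)) = Real.exp (-y) * Real.exp (-y) := by
      rw [← Real.exp_add]; ring_nf
    rw [Real.sinh_eq, Real.cosh_eq, h2]
    have hc : (0:ℝ) < (Real.exp y + Real.exp (-y))/2 := by positivity
    have hd : (0:ℝ) < 1 + Real.exp (-y) * Real.exp (-y) := by positivity
    rw [div_eq_div_iff hc.ne' hd.ne']
    linear_combination (Real.exp (-y)) * ht
  rw [heq]
  have h2y : Filter.Tendsto (fun y : ℝ => -(2*y)) Filter.atTop Filter.atBot := by
    have : Filter.Tendsto (fun y : ℝ => 2*y) Filter.atTop Filter.atTop :=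
      Filter.tendsto_id.const_mul_atTop two_pos
    exact Filter.tendsto_neg_atTop_atBot.comp this
  have hexp : Filter.Tendsto (fun y : ℝ => Real.exp (-(2*y))) Filter.atTop (nhds 0) :=
    Real.tendsto_exp_atBot.comp h2y
  have hnum : Filter.Tendsto (fun y : ℝ => 1 - Real.exp (-(2*y))) Filter.atTop (nhds 1) := by
    simpa using Filter.Tendsto.sub (tendsto_const_nhds (x := (1:ℝ))) hexp
  have hde : Filter.Tendsto (fun y : ℝ => 1 + Real.exp (-(2*y))) Filter.atTop (nhds 1) := by
    simpa using Filter.Tendsto.add (tendsto_const_nhds (x := (1:ℝ))) hexp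
  simpa [Pi.div_def] using hnum.div hde (by norm_num)

/-- The bridge density is a probability density on ℝ for every φ ∈ (0,1):
it is nonnegative and integrates to 1. -/
theorem bridgePDF_is_probability_density (φ : ℝ) (hφ : φ ∈ Set.Ioo (0:ℝ) 1) :
    (∀ u : ℝ, 0 ≤ bridgePDF φ u) ∧ (∫ u : ℝ, bridgePDF φ u) = 1 := by
  obtain ⟨hφ0, hφ1⟩ := hφ
  have hπ := Real.pi_pos
  have hsin : 0 < Real.sin (φ*π) := Real.sin_pos_of_pos_of_lt_pi (by nlinarith) (by nlinarith)
  have hden : ∀ u : ℝ, 0 < Real.cosh (φ * u) + Real.cos (φ * π) := by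
    intro u
    have h1 : (1:ℝ) ≤ Real.cosh (φ*u) := Real.one_le_cosh _
    have h2 : -1 < Real.cos (φ*π) := by
      have := Real.neg_one_le_cos (φ*π)
      rcases lt_or_eq_of_le this with h | h; · exact h
      exfalso
      have : Real.sin (φ*π) = 0 := by
        have := Real.sin_sq_add_cos_sq (φ*π); nlinarith
      linarith
    linarith
  have hnonneg : ∀ u : ℝ, 0 ≤ bridgePDF φ u := by
    intro u
    have := hden u
    unfold bridgePDF
    positivity
  refine ⟨hnonneg, ?_⟩
  set F : ℝ → ℝ := fun u => Real.arctan (Real.tan (φ*π/2) * (Real.sinh (φ*u/2) / Real.cosh (φ*u/2))) / (φ*π) with hF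
  have hderiv : ∀ x : ℝ, HasDerivAt F (bridgePDF φ x) x :=
    fun x => bridge_hasDerivAt φ ⟨hφ0, hφ1⟩ x
  -- limit at +∞
  have ha2 : φ*π/2 ∈ Set.Ioo (-(π/2)) (π/2) := by constructor <;> nlinarith
  have hmul : Filter.Tendsto (fun u : ℝ => φ*u/2) Filter.atTop Filter.atTop := by
    apply Filter.Tendsto.atTop_div_const two_pos
    exact Filter.tendsto_id.const_mul_atTop hφ0
  have htanh : Filter.Tendsto (fun u : ℝ => Real.sinh (φ*u/2) / Real.cosh (φ*u/2))
      Filter.atTop (nhds 1) := tanh_limit.comp hmul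
  have htop : Filter.Tendsto F Filter.atTop (nhds (1/2)) := by
    have h1 : Filter.Tendsto (fun u : ℝ => Real.tan (φ*π/2) * (Real.sinh (φ*u/2) / Real.cosh (φ*u/2)))
        Filter.atTop (nhds (Real.tan (φ*π/2))) := by
      simpa using htanh.const_mul (Real.tan (φ*π/2))
    have h2 : Filter.Tendsto (fun u : ℝ => Real.arctan (Real.tan (φ*π/2) * (Real.sinh (φ*u/2) / Real.cosh (φ*u/2))))
        Filter.atTop (nhds (Real.arctan (Real.tan (φ*π/2)))) :=
      (Real.continuous_arctan.tendsto _).comp h1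
    have h3 := h2.div_const (φ*π)
    rw [Real.arctan_tan ha2.1 ha2.2] at h3
    have : φ*π/2/(φ*π) = 1/2 := by
      field_simp
    rwa [this] at h3
  have hF0 : F 0 = 0 := by simp [hF]
  have hIoi : (∫ u in Set.Ioi (0:ℝ), bridgePDF φ u) = 1/2 - F 0 :=
    integral_Ioi_of_hasDerivAt_of_nonneg' (fun x _ => hderiv x)
      (fun x _ => hnonneg x) htop
  have heven : ∀ u : ℝ, bridgePDF φ |u| = bridgePDF φ u := by
    intro u
    unfold bridgePDF
    rw [show φ * |u| = |φ * u| by rw [abs_mul, abs_of_pos hφ0], Real.cosh_abs]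
  calc (∫ u : ℝ, bridgePDF φ u) = ∫ u : ℝ, bridgePDF φ |u| := by
        simp_rw [heven]
    _ = 2 * ∫ u in Set.Ioi (0:ℝ), bridgePDF φ u := integral_comp_abs
    _ = 1 := by rw [hIoi, hF0]; norm_num
end

section
/- The low-rank kernel R̃(s,s') = r(s)ᵀ R_qq^{-1} r(s') + 1(s=s')·(1 − r(s)ᵀ R_qq^{-1} r(s)) satisfies R̃(s,s) = 1 for every s, and is positive semidefinite provided R is positive definite, where r(s)_k = R(s, s̃_k) and (R_qq)_{kk'} = R(s̃_k, s̃_{k'}) for knots s̃_1,…,s̃_q. -/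
open Matrix
open Finset

lemma fiber_diag_nonneg {m : ℕ} {S : Type*} [DecidableEq S] (pts : Fin m → S)
    (c : Fin m → ℝ) (d : S → ℝ) (hd : ∀ s, 0 ≤ d s) :
    0 ≤ ∑ i, ∑ j, c i * c j * (if pts i = pts j then d (pts i) else 0) := by
  have step1 : ∀ i : Fin m,
      (∑ j, c i * c j * (if pts i = pts j then d (pts i) else 0))
        = c i * d (pts i) * (∑ j ∈ univ.filter (fun j => pts j = pts i), c j) := by
    intro i
    rw [Finset.sum_filter]
    rw [Finset.mul_sum]
    refine Finset.sum_congr rfl fun j _ => ?_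
    by_cases h : pts i = pts j
    · simp [h, eq_comm]; ring
    · rw [if_neg h, if_neg (fun hh : pts j = pts i => h hh.symm)]; ring
  simp only [step1]
  have step2 : (∑ i, c i * d (pts i) * (∑ j ∈ univ.filter (fun j => pts j = pts i), c j))
      = ∑ s ∈ univ.image pts, ∑ i ∈ univ.filter (fun i => pts i = s),
          c i * d (pts i) * (∑ j ∈ univ.filter (fun j => pts j = pts i), c j) := by
    rw [Finset.sum_fiberwise_eq_sum_filter univ (univ.image pts) pts
      (fun i => c i * d (pts i) * (∑ j ∈ univ.filter (fun j => pts j = pts i), c j))]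
    rw [Finset.filter_true_of_mem]
    intro i _
    exact Finset.mem_image_of_mem pts (Finset.mem_univ i)
  rw [step2]
  refine Finset.sum_nonneg fun s _ => ?_
  have heq : ∑ i ∈ univ.filter (fun i => pts i = s),
        c i * d (pts i) * (∑ j ∈ univ.filter (fun j => pts j = pts i), c j)
      = d s * (∑ j ∈ univ.filter (fun j => pts j = s), c j) ^ 2 := by
    rw [show (∑ i ∈ univ.filter (fun i => pts i = s),
        c i * d (pts i) * (∑ j ∈ univ.filter (fun j => pts j = pts i), c j))
        = ∑ i ∈ univ.filter (fun i => pts i = s),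
            c i * (d s * (∑ j ∈ univ.filter (fun j => pts j = s), c j)) from
      Finset.sum_congr rfl fun i hi => by
        rw [(Finset.mem_filter.mp hi).2]; ring]
    rw [← Finset.sum_mul]
    ring
  rw [heq]
  exact mul_nonneg (hd s) (sq_nonneg _)

lemma dot_sum_left {m q : ℕ} (c : Fin m → ℝ) (u : Fin m → Fin q → ℝ) (w : Fin q → ℝ) :
    (∑ i, c i • u i) ⬝ᵥ w = ∑ i, c i * (u i ⬝ᵥ w) := by
  simp only [dotProduct, Finset.sum_apply, Pi.smul_apply, smul_eq_mul,
    Finset.sum_mul, Finset.mul_sum]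
  rw [Finset.sum_comm]
  exact Finset.sum_congr rfl fun i _ => Finset.sum_congr rfl fun k _ => by ring

lemma dot_sum_right {m q : ℕ} (c : Fin m → ℝ) (v : Fin q → ℝ) (w : Fin m → Fin q → ℝ) :
    v ⬝ᵥ (∑ j, c j • w j) = ∑ j, c j * (v ⬝ᵥ w j) := by
  simp only [dotProduct, Finset.sum_apply, Pi.smul_apply, smul_eq_mul,
    Finset.sum_mul, Finset.mul_sum]
  rw [Finset.sum_comm]
  exact Finset.sum_congr rfl fun i _ => Finset.sum_congr rfl fun k _ => by ring

lemma bilinear_expand {m q : ℕ} (A : Matrix (Fin q) (Fin q) ℝ)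
    (u : Fin m → Fin q → ℝ) (c : Fin m → ℝ) :
    ∑ i, ∑ j, c i * c j * (u i ⬝ᵥ A.mulVec (u j))
      = (∑ i, c i • u i) ⬝ᵥ A.mulVec (∑ i, c i • u i) := by
  have hmv : A.mulVec (∑ j, c j • u j) = ∑ j, c j • A.mulVec (u j) := by
    rw [show A.mulVec = A.mulVecLin from rfl, map_sum]
    simp
  rw [hmv, dot_sum_left]
  refine Finset.sum_congr rfl fun i _ => ?_
  rw [dot_sum_right, Finset.mul_sum]
  exact Finset.sum_congr rfl fun j _ => by ring

/-- The low-rank kernel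
`R̃(s,s') = r(s)ᵀ R_qq⁻¹ r(s') + 1(s=s')(1 − r(s)ᵀ R_qq⁻¹ r(s))` built from a positive
definite correlation kernel `R` with unit diagonal and knots `s̃_1,…,s̃_q` satisfies
`R̃(s,s) = 1` for every `s`, and is positive semidefinite. -/
theorem lowrank_kernel_unit_diag_posSemidef
    {S : Type*} [DecidableEq S] (q : ℕ)
    (R : S → S → ℝ)
    (hrange : ∀ s s', R s s' ∈ Set.Icc (-1 : ℝ) 1)
    (hdiag : ∀ s, R s s = 1)
    (hsymm : ∀ s s', R s s' = R s' s)
    -- positive definiteness of the kernel R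
    (hpd : ∀ (m : ℕ) (pts : Fin m → S), Function.Injective pts →
      ∀ c : Fin m → ℝ, c ≠ 0 →
        0 < ∑ i, ∑ j, c i * c j * R (pts i) (pts j))
    (knots : Fin q → S) (hknots : Function.Injective knots)
    (Rqq : Matrix (Fin q) (Fin q) ℝ) (hRqq : Rqq = fun k k' => R (knots k) (knots k'))
    (r : S → Fin q → ℝ) (hr : r = fun s k => R s (knots k))
    (Rtil : S → S → ℝ)
    (hRtil : Rtil = fun s s' =>
      r s ⬝ᵥ Rqq⁻¹.mulVec (r s')
        + (if s = s' then 1 - r s ⬝ᵥ Rqq⁻¹.mulVec (r s) else 0)) :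
    (∀ s, Rtil s s = 1) ∧
      (∀ (m : ℕ) (pts : Fin m → S) (c : Fin m → ℝ),
        0 ≤ ∑ i, ∑ j, c i * c j * Rtil (pts i) (pts j)) := by
  have hQsymm : ∀ a b, Rqq a b = Rqq b a := by
    intro a b; rw [hRqq]; exact hsymm _ _
  have hherm : Rqq.IsHermitian := by
    unfold Matrix.IsHermitian
    ext a b
    simp [Matrix.conjTranspose_apply, hQsymm a b]
  have hPD : Rqq.PosDef := by
    refine Matrix.posDef_iff_dotProduct_mulVec.mpr ⟨hherm, fun x hx => ?_⟩
    have h2 : star x ⬝ᵥ Rqq.mulVec x = ∑ i, ∑ j, x i * x j * R (knots i) (knots j) := by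
      simp only [star_trivial, dotProduct, mulVec, hRqq, Finset.mul_sum]
      exact Finset.sum_congr rfl fun i _ => Finset.sum_congr rfl fun j _ => by ring
    rw [h2]
    exact hpd q knots hknots x hx
  have hApsd : (Rqq⁻¹).PosSemidef := hPD.inv.posSemidef
  have hdetU : IsUnit Rqq.det := isUnit_iff_ne_zero.mpr (ne_of_gt hPD.det_pos)
  have hmul : Rqq * Rqq⁻¹ = 1 := Matrix.mul_nonsing_inv _ hdetU
  have hmul' : Rqq⁻¹ * Rqq = 1 := Matrix.nonsing_inv_mul _ hdetU
  set d : S → ℝ := fun s => 1 - r s ⬝ᵥ Rqq⁻¹.mulVec (r s) with hdD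
  have hd : ∀ s, 0 ≤ d s := by
    intro s
    by_cases hs : ∃ k, knots k = s
    · -- s is a knot; then the correction term is zero
      obtain ⟨k, rfl⟩ := hs
      have hre : r (knots k) = fun l => Rqq k l := by
        funext l; rw [hr, hRqq]
      have hmv : Rqq⁻¹.mulVec (r (knots k)) = fun l => (1 : Matrix (Fin q) (Fin q) ℝ) l k := by
        funext l
        rw [← hmul']
        simp only [Matrix.mulVec, Matrix.mul_apply, dotProduct, hre]
        exact Finset.sum_congr rfl fun l' _ => by rw [hQsymm k l']
      have : r (knots k) ⬝ᵥ Rqq⁻¹.mulVec (r (knots k)) = 1 := by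
        rw [hmv, hre]
        simp only [dotProduct, Matrix.one_apply]
        rw [Finset.sum_congr rfl (fun l _ => by
          rw [show (Rqq k l * if l = k then (1:ℝ) else 0) = if l = k then Rqq k l else 0 by
            by_cases h : l = k <;> simp [h]])]
        rw [Finset.sum_ite_eq' univ k (fun l => Rqq k l)]
        simp [hRqq, hdiag]
      simp [hdD, this]
    · -- s is not a knot: use positive definiteness on q+1 points
      push_neg at hs
      set w : Fin q → ℝ := Rqq⁻¹.mulVec (r s) with hw
      set pts' : Fin (q + 1) → S := Fin.cons s knots with hpts'
      have hinj : Function.Injective pts' := by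
        intro a b hab
        induction a using Fin.cases <;> induction b using Fin.cases <;>
          simp only [hpts', Fin.cons_zero, Fin.cons_succ] at hab
        · rfl
        · exact absurd hab.symm (hs _)
        · exact absurd hab (hs _)
        · rw [hknots hab]
      set c' : Fin (q + 1) → ℝ := Fin.cons 1 (fun k => -(w k)) with hc'
      have hne : c' ≠ 0 := by
        intro h
        have := congrFun h 0
        simp [hc'] at this
      have key := hpd (q + 1) pts' hinj c' hne
      have hQw : Rqq.mulVec w = r s := by
        rw [hw, Matrix.mulVec_mulVec, hmul, Matrix.one_mulVec]
      have ht4 : ∑ i, ∑ j, w i * w j * Rqq i j = ∑ k, w k * r s k := by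
        have : ∑ i, ∑ j, w i * w j * Rqq i j = w ⬝ᵥ Rqq.mulVec w := by
          simp only [dotProduct, Matrix.mulVec, Finset.mul_sum]
          exact Finset.sum_congr rfl fun i _ => Finset.sum_congr rfl fun j _ => by ring
        rw [this, hQw]
        rfl
      have hsum : (∑ i, ∑ j, c' i * c' j * R (pts' i) (pts' j))
          = 1 - ∑ k, w k * r s k := by
        simp only [Fin.sum_univ_succ, hc', hpts', Fin.cons_zero, Fin.cons_succ]
        have e1 : R s s = 1 := hdiag s
        have e2 : ∀ j, R s (knots j) = r s j := by intro j; rw [hr]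
        have e3 : ∀ i, R (knots i) s = r s i := by intro i; rw [hsymm, hr]
        have e4 : ∀ i j, R (knots i) (knots j) = Rqq i j := by intro i j; rw [hRqq]
        simp only [e1, e2, e3, e4]
        rw [Finset.sum_add_distrib]
        have l1 : ∑ j, (1:ℝ) * -w j * r s j = -∑ k, w k * r s k := by
          rw [← Finset.sum_neg_distrib]
          exact Finset.sum_congr rfl fun j _ => by ring
        have l2 : ∑ i, -w i * 1 * r s i = -∑ k, w k * r s k := by
          rw [← Finset.sum_neg_distrib]
          exact Finset.sum_congr rfl fun i _ => by ring
        have l3 : ∑ i, ∑ j, -w i * -w j * Rqq i j = ∑ k, w k * r s k := by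
          rw [← ht4]
          exact Finset.sum_congr rfl fun i _ => Finset.sum_congr rfl fun j _ => by ring
        rw [l1, l2, l3]
        ring
      rw [hsum] at key
      have hdot : r s ⬝ᵥ Rqq⁻¹.mulVec (r s) = ∑ k, w k * r s k := by
        rw [← hw]
        simp only [dotProduct]
        exact Finset.sum_congr rfl fun k _ => by ring
      simp only [hdD, hdot]
      linarith
  constructor
  · intro s
    rw [hRtil]
    simp
  · intro m pts c
    have hsplit : ∀ i j : Fin m, c i * c j * Rtil (pts i) (pts j)
        = c i * c j * (r (pts i) ⬝ᵥ Rqq⁻¹.mulVec (r (pts j)))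
          + c i * c j * (if pts i = pts j then d (pts i) else 0) := by
      intro i j
      rw [hRtil, hdD]
      by_cases h : pts i = pts j <;> simp [h] <;> ring
    simp only [hsplit, Finset.sum_add_distrib]
    have h1 : 0 ≤ ∑ i, ∑ j, c i * c j * (r (pts i) ⬝ᵥ Rqq⁻¹.mulVec (r (pts j))) := by
      rw [bilinear_expand Rqq⁻¹ (fun i => r (pts i)) c]
      have := (Matrix.posSemidef_iff_dotProduct_mulVec.mp hApsd).2 (∑ i, c i • r (pts i))
      simpa using this
    have h2 := fiber_diag_nonneg pts c d hd
    linarith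
end
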